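/- On an LCS manifold, substituting η = −ι_{dX}ω + λα and E = ♯_Λα into the Jacobi sigma model Lagrangian density η_i ∧ dX^i + ½Λ^{ij}η_i ∧ η_j − E^iη_i ∧ λ, all terms involving λ cancel, and the density equals ω_{ij} dX^i ∧ dX^j (up to the overall convention factor). -/
import Mathlib


open scoped BigOperators

/-- substituting `η_i = −ω_{ij}dX^j + α_i λ` (with `Λ = ω^{-1}`,
`E = ♯_Λα`) into the Jacobi sigma model Lagrangian density
`η_i ∧ dX^i + ½Λ^{ij}η_i ∧ η_j − E^iη_i ∧ λ`, all terms involving `λ` cancel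
(on shell, i.e. using the constraint `E^iη_i = 0`) and the density equals
`½ ω_{ij} dX^i ∧ dX^j`. Here the worldsheet wedge is computed in the exterior
algebra of the 2-dimensional cotangent fiber `W`. -/
theorem lcs_second_order_action_density
    {W : Type*} [AddCommGroup W] [Module ℝ W] [FiniteDimensional ℝ W]
    (hW : Module.finrank ℝ W = 2)
    {m : ℕ} (ω Λ : Fin m → Fin m → ℝ)
    (hωskew : ∀ i j, ω i j = - ω j i)
    (hΛω : ∀ i k, (∑ j, Λ i j * ω j k) = if i = k then 1 else 0)
    (α : Fin m → ℝ) (E : Fin m → ℝ)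
    (hE : ∀ i, E i = ∑ j, Λ i j * α j)
    (dX : Fin m → W) (lam : W)
    (η : Fin m → W)
    (hη : ∀ i, η i = (-∑ j, ω i j • dX j) + α i • lam)
    (hconstraint : (∑ i, E i • η i) = 0) :
    (∑ i, ExteriorAlgebra.ι ℝ (η i) * ExteriorAlgebra.ι ℝ (dX i))
      + (1/2 : ℝ) • (∑ i, ∑ j, Λ i j •
          (ExteriorAlgebra.ι ℝ (η i) * ExteriorAlgebra.ι ℝ (η j)))
      - (∑ i, E i • (ExteriorAlgebra.ι ℝ (η i) * ExteriorAlgebra.ι ℝ lam)) =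
    (1/2 : ℝ) • (∑ i, ∑ j, ω i j •
        (ExteriorAlgebra.ι ℝ (dX i) * ExteriorAlgebra.ι ℝ (dX j))) := by
  classical
  -- Matrix facts
  set M : Matrix (Fin m) (Fin m) ℝ := Matrix.of Λ with hMdef
  set N : Matrix (Fin m) (Fin m) ℝ := Matrix.of ω with hNdef
  have hMN : M * N = 1 := by
    ext i k
    simpa [Matrix.mul_apply, Matrix.one_apply, hMdef, hNdef] using hΛω i k
  have hNM : N * M = 1 := mul_eq_one_comm.mp hMN
  have hωΛ : ∀ i k, (∑ j, ω i j * Λ j k) = if i = k then 1 else 0 := by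
    intro i k
    have h := congrFun (congrFun hNM i) k
    simpa [Matrix.mul_apply, Matrix.one_apply, hMdef, hNdef] using h
  have hNT : N.transpose = -N := by
    ext i j
    simpa [hNdef] using (hωskew j i)
  have hMT : M.transpose = -M := by
    have h1 : N.transpose * M.transpose = 1 := by
      rw [← Matrix.transpose_mul, hMN, Matrix.transpose_one]
    rw [hNT] at h1
    have h2 : N * M.transpose = -1 := by
      rw [Matrix.neg_mul] at h1
      exact neg_eq_iff_eq_neg.mp h1
    calc M.transpose = 1 * M.transpose := (one_mul _).symm
      _ = (M * N) * M.transpose := by rw [hMN]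
      _ = M * (N * M.transpose) := by rw [Matrix.mul_assoc]
      _ = M * (-1) := by rw [h2]
      _ = -M := by simp
  have hΛskew : ∀ i j, Λ i j = - Λ j i := by
    intro i j
    have h := congrFun (congrFun hMT j) i
    simpa [Matrix.transpose_apply, hMdef] using h
  -- ∑ E i * α i = 0
  have hEα : (∑ i, E i * α i) = 0 := by
    have h : (∑ i, E i * α i) = ∑ i, ∑ k, Λ i k * α k * α i := by
      simp [hE, Finset.sum_mul]
    have h2 : (∑ i, ∑ k, Λ i k * α k * α i)
        = - ∑ i, ∑ k, Λ i k * α k * α i := by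
      conv_lhs => rw [Finset.sum_comm]
      rw [← Finset.sum_neg_distrib]
      refine Finset.sum_congr rfl fun i _ => ?_
      rw [← Finset.sum_neg_distrib]
      refine Finset.sum_congr rfl fun k _ => ?_
      rw [hΛskew k i]; ring
    rw [h]
    linarith [h2]
  -- ∑ E i * ω i j = -α j
  have hEω : ∀ j, (∑ i, E i * ω i j) = - α j := by
    intro j
    have h : (∑ i, E i * ω i j) = ∑ k, α k * (∑ i, Λ i k * ω i j) := by
      simp only [hE, Finset.sum_mul]
      rw [Finset.sum_comm]
      refine Finset.sum_congr rfl fun k _ => ?_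
      rw [Finset.mul_sum]
      refine Finset.sum_congr rfl fun i _ => by ring
    rw [h]
    have h1 : ∀ k, (∑ i, Λ i k * ω i j) = -(if j = k then 1 else 0) := by
      intro k
      rw [← hωΛ j k, ← Finset.sum_neg_distrib]
      refine Finset.sum_congr rfl fun i _ => ?_
      rw [hωskew i j]; ring
    simp [h1]
  -- constraint implies ∑ α j • dX j = 0
  have hα : (∑ j, α j • dX j) = (0 : W) := by
    have h : (∑ i, E i • η i) = ∑ j, α j • dX j := by
      calc (∑ i, E i • η i)
          = ∑ i, ((-∑ j, (E i * ω i j) • dX j) + (E i * α i) • lam) := by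
            refine Finset.sum_congr rfl fun i _ => ?_
            rw [hη i, smul_add, smul_neg, Finset.smul_sum]
            simp [smul_smul]
        _ = (-∑ i, ∑ j, (E i * ω i j) • dX j) + (∑ i, (E i * α i)) • lam := by
            rw [Finset.sum_add_distrib, Finset.sum_neg_distrib, Finset.sum_smul]
        _ = (-∑ j, (∑ i, E i * ω i j) • dX j) + (0 : ℝ) • lam := by
            rw [Finset.sum_comm, hEα]
            congr 2
            exact Finset.sum_congr rfl fun j _ => (Finset.sum_smul).symm
        _ = ∑ j, α j • dX j := by
            rw [zero_smul, add_zero, ← Finset.sum_neg_distrib]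
            refine Finset.sum_congr rfl fun j _ => ?_
            rw [hEω j, neg_smul, neg_neg]
    rw [h] at hconstraint
    exact hconstraint
  -- ∑ j, Λ i j • η j = -dX i + E i • lam
  have hΛη : ∀ i, (∑ j, Λ i j • η j) = -dX i + E i • lam := by
    intro i
    calc (∑ j, Λ i j • η j)
        = ∑ j, ((-∑ k, (Λ i j * ω j k) • dX k) + (Λ i j * α j) • lam) := by
          refine Finset.sum_congr rfl fun j _ => ?_
          rw [hη j, smul_add, smul_neg, Finset.smul_sum]
          simp [smul_smul]
      _ = (-∑ j, ∑ k, (Λ i j * ω j k) • dX k) + (∑ j, (Λ i j * α j)) • lam := by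
          rw [Finset.sum_add_distrib, Finset.sum_neg_distrib, Finset.sum_smul]
      _ = (-∑ k, (∑ j, Λ i j * ω j k) • dX k) + E i • lam := by
          rw [Finset.sum_comm, hE i]
          congr 2
          exact Finset.sum_congr rfl fun k _ => (Finset.sum_smul).symm
      _ = -dX i + E i • lam := by
          congr 1
          simp only [hΛω]
          rw [← Finset.sum_neg_distrib]
          rw [Finset.sum_eq_single i]
          · simp
          · intro k _ hk
            simp [Ne.symm hk]
          · simp
  -- exterior algebra part
  have hι0 : (∑ i, E i • ExteriorAlgebra.ι ℝ (η i)) = 0 := by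
    have h : (∑ i, E i • ExteriorAlgebra.ι ℝ (η i))
        = ExteriorAlgebra.ι ℝ (∑ i, E i • η i) := by
      rw [map_sum]
      exact Finset.sum_congr rfl fun i _ => (map_smul _ _ _).symm
    rw [h, hconstraint, map_zero]
  have hT3 : (∑ i, E i • (ExteriorAlgebra.ι ℝ (η i) * ExteriorAlgebra.ι ℝ lam)) = 0 := by
    have h : (∑ i, E i • (ExteriorAlgebra.ι ℝ (η i) * ExteriorAlgebra.ι ℝ lam))
        = (∑ i, E i • ExteriorAlgebra.ι ℝ (η i)) * ExteriorAlgebra.ι ℝ lam := by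
      rw [Finset.sum_mul]
      exact Finset.sum_congr rfl fun i _ => (smul_mul_assoc _ _ _).symm
    rw [h, hι0, zero_mul]
  have hT2 : (∑ i, ∑ j, Λ i j • (ExteriorAlgebra.ι ℝ (η i) * ExteriorAlgebra.ι ℝ (η j)))
      = -(∑ i, ExteriorAlgebra.ι ℝ (η i) * ExteriorAlgebra.ι ℝ (dX i))
        + ∑ i, E i • (ExteriorAlgebra.ι ℝ (η i) * ExteriorAlgebra.ι ℝ lam) := by
    have h1 : ∀ i, (∑ j, Λ i j • (ExteriorAlgebra.ι ℝ (η i) * ExteriorAlgebra.ι ℝ (η j)))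
        = -(ExteriorAlgebra.ι ℝ (η i) * ExteriorAlgebra.ι ℝ (dX i))
          + E i • (ExteriorAlgebra.ι ℝ (η i) * ExteriorAlgebra.ι ℝ lam) := by
      intro i
      have h2 : (∑ j, Λ i j • (ExteriorAlgebra.ι ℝ (η i) * ExteriorAlgebra.ι ℝ (η j)))
          = ExteriorAlgebra.ι ℝ (η i) * ExteriorAlgebra.ι ℝ (∑ j, Λ i j • η j) := by
        rw [map_sum, Finset.mul_sum]
        refine Finset.sum_congr rfl fun j _ => ?_
        rw [map_smul, mul_smul_comm]
      rw [h2, hΛη i, map_add, map_neg, map_smul, mul_add, mul_neg, mul_smul_comm]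
    rw [← Finset.sum_neg_distrib, ← Finset.sum_add_distrib]
    exact Finset.sum_congr rfl fun i _ => h1 i
  have hS1 : (∑ i, ExteriorAlgebra.ι ℝ (η i) * ExteriorAlgebra.ι ℝ (dX i))
      = ∑ i, ∑ j, ω i j • (ExteriorAlgebra.ι ℝ (dX i) * ExteriorAlgebra.ι ℝ (dX j)) := by
    have h1 : ∀ i, ExteriorAlgebra.ι ℝ (η i) * ExteriorAlgebra.ι ℝ (dX i)
        = (-∑ j, ω i j • (ExteriorAlgebra.ι ℝ (dX j) * ExteriorAlgebra.ι ℝ (dX i)))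
          + α i • (ExteriorAlgebra.ι ℝ lam * ExteriorAlgebra.ι ℝ (dX i)) := by
      intro i
      rw [hη i, map_add, map_neg, map_sum, add_mul, neg_mul, map_smul, smul_mul_assoc,
          Finset.sum_mul]
      congr 2
      refine Finset.sum_congr rfl fun j _ => ?_
      rw [map_smul, smul_mul_assoc]
    have h2 : (∑ i, α i • (ExteriorAlgebra.ι ℝ lam * ExteriorAlgebra.ι ℝ (dX i))) = 0 := by
      have h3 : (∑ i, α i • (ExteriorAlgebra.ι ℝ lam * ExteriorAlgebra.ι ℝ (dX i)))
          = ExteriorAlgebra.ι ℝ lam * ExteriorAlgebra.ι ℝ (∑ i, α i • dX i) := by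
        rw [map_sum, Finset.mul_sum]
        refine Finset.sum_congr rfl fun i _ => ?_
        rw [map_smul, mul_smul_comm]
      rw [h3, hα, map_zero, mul_zero]
    have h4 : (∑ i, ∑ j, ω i j • (ExteriorAlgebra.ι ℝ (dX j) * ExteriorAlgebra.ι ℝ (dX i)))
        = -∑ i, ∑ j, ω i j • (ExteriorAlgebra.ι ℝ (dX i) * ExteriorAlgebra.ι ℝ (dX j)) := by
      conv_lhs => rw [Finset.sum_comm]
      rw [← Finset.sum_neg_distrib]
      refine Finset.sum_congr rfl fun i _ => ?_
      rw [← Finset.sum_neg_distrib]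
      refine Finset.sum_congr rfl fun j _ => ?_
      rw [hωskew j i, neg_smul]
    calc (∑ i, ExteriorAlgebra.ι ℝ (η i) * ExteriorAlgebra.ι ℝ (dX i))
        = (-∑ i, ∑ j, ω i j • (ExteriorAlgebra.ι ℝ (dX j) * ExteriorAlgebra.ι ℝ (dX i)))
          + ∑ i, α i • (ExteriorAlgebra.ι ℝ lam * ExteriorAlgebra.ι ℝ (dX i)) := by
          rw [← Finset.sum_neg_distrib, ← Finset.sum_add_distrib]
          exact Finset.sum_congr rfl fun i _ => h1 i
      _ = ∑ i, ∑ j, ω i j • (ExteriorAlgebra.ι ℝ (dX i) * ExteriorAlgebra.ι ℝ (dX j)) := by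
          rw [h2, add_zero, h4, neg_neg]
  rw [hT2, hT3, hS1]
  module
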